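/- For every integer n ≥ 1 there exists a prime p and a sizeable graph Γ of rank n in which every block A_i^s and every block B_j^t has cardinality exactly p, and moreover, for every choice of i, j ∈ {1, …, n} and s, t ∈ {+, −}, the subgraph of Γ induced on A_i^s ∪ B_j^t is an embedded cycle of length 2p (in particular, it is connected and 2-regular). -/

import Mathlib

/-- The cycle graph on `ℤ/Nℤ`: distinct vertices `i` and `j` are adjacent
if and only if `i - j = ±1`. -/
def cycleGraphZ (N : ℕ) : SimpleGraph (ZMod N) where
  Adj i j := i ≠ j ∧ (i - j = 1 ∨ j - i = 1)
  symm := ⟨fun i j h => ⟨h.1.symm, h.2.symm⟩⟩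
  loopless := ⟨fun i h => h.1 rfl⟩

/-- For every integer `n ≥ 1` there exist a prime `p` and a sizeable graph of rank `n`
whose blocks all have cardinality exactly `p`, and in which the subgraph induced on the
union of any block of `A` with any block of `B` is an embedded cycle of length `2p`,
i.e. is isomorphic to the cycle graph on `2p` vertices. -/
lemma pow3_sum_lt {a b M : ℕ} (ha : a < M) (hb : b < M) : 3 ^ a + 3 ^ b < 3 ^ M := by
  have h1 : 3 ^ a ≤ 3 ^ (M - 1) := Nat.pow_le_pow_right (by norm_num) (by omega)
  have h2 : 3 ^ b ≤ 3 ^ (M - 1) := Nat.pow_le_pow_right (by norm_num) (by omega)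
  have h3 : 3 ^ M = 3 * 3 ^ (M - 1) := by
    rw [← pow_succ']
    congr 1
    omega
  have h4 : 0 < 3 ^ (M - 1) := Nat.pow_pos (by norm_num)
  omega

lemma pow3_max_eq {a b c d : ℕ} (h : 3 ^ a + 3 ^ b = 3 ^ c + 3 ^ d) :
    max a b = max c d := by
  by_contra hne
  rcases Nat.lt_or_ge (max a b) (max c d) with hlt | hge
  · have := pow3_sum_lt (lt_of_le_of_lt (le_max_left a b) hlt)
      (lt_of_le_of_lt (le_max_right a b) hlt)
    have hc : 3 ^ max c d ≤ 3 ^ c + 3 ^ d := by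
      rcases max_cases c d with ⟨he, _⟩ | ⟨he, _⟩ <;> rw [he]
      · exact Nat.le_add_right _ _
      · exact Nat.le_add_left _ _
    omega
  · have hlt : max c d < max a b := lt_of_le_of_ne hge (fun he => hne he.symm)
    have := pow3_sum_lt (lt_of_le_of_lt (le_max_left c d) hlt)
      (lt_of_le_of_lt (le_max_right c d) hlt)
    have hc : 3 ^ max a b ≤ 3 ^ a + 3 ^ b := by
      rcases max_cases a b with ⟨he, _⟩ | ⟨he, _⟩ <;> rw [he]
      · exact Nat.le_add_right _ _
      · exact Nat.le_add_left _ _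
    omega

lemma pow3_inj {a b : ℕ} (h : (3:ℕ) ^ a = 3 ^ b) : a = b :=
  Nat.pow_right_injective (by norm_num) h

lemma pow3_pair {a b c d : ℕ} (h : 3 ^ a + 3 ^ b = 3 ^ c + 3 ^ d) :
    (a = c ∧ b = d) ∨ (a = d ∧ b = c) := by
  have hmax := pow3_max_eq h
  rcases le_total a b with h1 | h1 <;> rcases le_total c d with h2 | h2
  · have hbd : b = d := by rwa [max_eq_right h1, max_eq_right h2] at hmax
    left
    refine ⟨pow3_inj ?_, hbd⟩
    subst hbd
    omega
  · have hbc : b = c := by rwa [max_eq_right h1, max_eq_left h2] at hmax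
    right
    refine ⟨pow3_inj ?_, hbc⟩
    subst hbc
    omega
  · have had : a = d := by rwa [max_eq_left h1, max_eq_right h2] at hmax
    right
    refine ⟨had, pow3_inj ?_⟩
    subst had
    omega
  · have hac : a = c := by rwa [max_eq_left h1, max_eq_left h2] at hmax
    left
    refine ⟨hac, pow3_inj ?_⟩
    subst hac
    omega

namespace SizeableAux

abbrev K (n : ℕ) := Fin n × Bool

def idx {n : ℕ} (k : K n) : ℕ := k.1.val + n * (cond k.2 1 0)

lemma idx_lt {n : ℕ} (k : K n) : idx k < 2 * n := by
  obtain ⟨i, s⟩ := k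
  have := i.isLt
  cases s <;> simp [idx] <;> omega

lemma idx_inj {n : ℕ} {k k' : K n} (h : idx k = idx k') : k = k' := by
  obtain ⟨i, s⟩ := k
  obtain ⟨i', s'⟩ := k'
  have hi := i.isLt
  have hi' := i'.isLt
  cases s <;> cases s' <;> simp [idx] at h ⊢ <;> [skip; omega; omega; skip] <;>
    exact Fin.ext (by omega)

def pidx {n : ℕ} (k l : K n) : ℕ := 2 * (idx k * (2 * n) + idx l)

lemma pidx_succ_lt {n : ℕ} (k l : K n) : pidx k l + 1 < 8 * n ^ 2 := by
  have h1 := idx_lt k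
  have h2 := idx_lt l
  have : idx k * (2 * n) ≤ (2 * n - 1) * (2 * n) :=
    Nat.mul_le_mul_right _ (by omega)
  unfold pidx
  nlinarith

lemma pidx_inj {n : ℕ} {k k' l l' : K n} (h : pidx k l = pidx k' l') :
    k = k' ∧ l = l' := by
  have h1 := idx_lt l
  have h2 := idx_lt l'
  unfold pidx at h
  have hbase : idx k * (2 * n) + idx l = idx k' * (2 * n) + idx l' := by omega
  have hl : idx l = idx l' := by
    have e1 : (idx k * (2 * n) + idx l) % (2 * n) = idx l := by
      rw [Nat.add_comm, Nat.add_mul_mod_self_right]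
      exact Nat.mod_eq_of_lt h1
    have e2 : (idx k' * (2 * n) + idx l') % (2 * n) = idx l' := by
      rw [Nat.add_comm, Nat.add_mul_mod_self_right]
      exact Nat.mod_eq_of_lt h2
    rw [← e1, ← e2, hbase]
  have hk : idx k = idx k' := by
    have hn : 0 < 2 * n := by omega
    have : idx k * (2 * n) = idx k' * (2 * n) := by omega
    exact Nat.eq_of_mul_eq_mul_right hn this
  exact ⟨idx_inj hk, idx_inj hl⟩

def Erel {n p : ℕ} (a b : K n × ZMod p) : Prop :=
  b.2 - a.2 = (3 : ZMod p) ^ pidx a.1 b.1 ∨ b.2 - a.2 = (3 : ZMod p) ^ (pidx a.1 b.1 + 1)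

def Gamma (n p : ℕ) : SimpleGraph ((K n × ZMod p) ⊕ (K n × ZMod p)) where
  Adj x y := match x, y with
    | .inl a, .inr b => Erel a b
    | .inr b, .inl a => Erel a b
    | _, _ => False
  symm := ⟨by rintro (a | b) (a' | b') h <;> exact h⟩
  loopless := ⟨by rintro (a | b) h <;> exact h⟩

lemma gamma_adj_inl_inr {n p : ℕ} (a b : K n × ZMod p) :
    (Gamma n p).Adj (.inl a) (.inr b) ↔ Erel a b := Iff.rfl

lemma gamma_adj_inr_inl {n p : ℕ} (a b : K n × ZMod p) :
    (Gamma n p).Adj (.inr b) (.inl a) ↔ Erel a b := Iff.rfl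

lemma gamma_adj_inl_inl {n p : ℕ} (a b : K n × ZMod p) :
    ¬ (Gamma n p).Adj (.inl a) (.inl b) := fun h => h

lemma gamma_adj_inr_inr {n p : ℕ} (a b : K n × ZMod p) :
    ¬ (Gamma n p).Adj (.inr a) (.inr b) := fun h => h


lemma erel_exists {n p : ℕ} {a b : K n × ZMod p} (h : Erel a b) :
    ∃ c : ℕ, b.2 - a.2 = (3 : ZMod p) ^ c ∧
      (c = pidx a.1 b.1 ∨ c = pidx a.1 b.1 + 1) := by
  rcases h with h | h
  · exact ⟨_, h, Or.inl rfl⟩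
  · exact ⟨_, h, Or.inr rfl⟩

lemma no4 {n p : ℕ} (hplarge : 3 ^ (8 * n ^ 2) < p)
    {k k' l l' : K n} {x x' y y' : ZMod p}
    (hA : ((k, x) : K n × ZMod p) ≠ (k', x'))
    (hB : ((l, y) : K n × ZMod p) ≠ (l', y'))
    (e1 : Erel (k, x) (l, y)) (e2 : Erel (k', x') (l, y))
    (e3 : Erel (k', x') (l', y')) (e4 : Erel (k, x) (l', y')) : False := by
  obtain ⟨c1, hv1, hr1⟩ := erel_exists e1
  obtain ⟨c2, hv2, hr2⟩ := erel_exists e2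
  obtain ⟨c3, hv3, hr3⟩ := erel_exists e3
  obtain ⟨c4, hv4, hr4⟩ := erel_exists e4
  simp only at hv1 hv2 hv3 hv4 hr1 hr2 hr3 hr4
  have hzmod : (3 : ZMod p) ^ c1 + 3 ^ c3 = 3 ^ c2 + 3 ^ c4 := by
    rw [← hv1, ← hv2, ← hv3, ← hv4]; ring
  -- bounds
  have hb1 : c1 < 8 * n ^ 2 := by
    have := pidx_succ_lt k l; omega
  have hb2 : c2 < 8 * n ^ 2 := by
    have := pidx_succ_lt k' l; omega
  have hb3 : c3 < 8 * n ^ 2 := by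
    have := pidx_succ_lt k' l'; omega
  have hb4 : c4 < 8 * n ^ 2 := by
    have := pidx_succ_lt k l'; omega
  have hnat : (3 : ℕ) ^ c1 + 3 ^ c3 = 3 ^ c2 + 3 ^ c4 := by
    have hcast : (((3 : ℕ) ^ c1 + 3 ^ c3 : ℕ) : ZMod p) = ((3 ^ c2 + 3 ^ c4 : ℕ) : ZMod p) := by
      push_cast
      exact hzmod
    have h1 := pow3_sum_lt hb1 hb3
    have h2 := pow3_sum_lt hb2 hb4
    have := (ZMod.natCast_eq_natCast_iff _ _ _).mp hcast
    have := Nat.ModEq.eq_of_lt_of_lt this (by omega) (by omega)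
    exact this
  obtain ⟨m1, hm1⟩ : ∃ m, pidx k l = 2 * m := ⟨_, rfl⟩
  obtain ⟨m2, hm2⟩ : ∃ m, pidx k' l = 2 * m := ⟨_, rfl⟩
  obtain ⟨m4, hm4⟩ : ∃ m, pidx k l' = 2 * m := ⟨_, rfl⟩
  rcases pow3_pair hnat with ⟨h12, _⟩ | ⟨h14, _⟩
  · have hpe : pidx k l = pidx k' l := by omega
    have hk : k = k' := (pidx_inj hpe).1
    have hx : x = x' := by
      have : y - x = y - x' := by rw [hv1, hv2, h12]
      exact sub_right_injective this
    exact hA (by rw [hk, hx])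
  · have hpe : pidx k l = pidx k l' := by omega
    have hl : l = l' := (pidx_inj hpe).2
    have hy : y = y' := by
      have : y - x = y' - x := by rw [hv1, hv4, h14]
      exact sub_left_injective this
    exact hB (by rw [hl, hy])

lemma gamma_no4 {n p : ℕ} (hplarge : 3 ^ (8 * n ^ 2) < p) :
    ¬ ∃ (v : (K n × ZMod p) ⊕ (K n × ZMod p)) (c : (Gamma n p).Walk v v),
      c.IsCycle ∧ c.length = 4 := by
  rintro ⟨v, c, hcyc, hlen⟩
  have hnd := hcyc.support_nodup
  clear hcyc
  have main : ∀ (u w : (K n × ZMod p) ⊕ (K n × ZMod p)) (q : (Gamma n p).Walk u w),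
      u = w → q.length = 4 → q.support.tail.Nodup → False := by
    intro u w q
    cases q with
    | nil => intro _ hlen _; simp at hlen
    | cons h1 q =>
      cases q with
      | nil => intro _ hlen _; simp at hlen
      | cons h2 q =>
        cases q with
        | nil => intro _ hlen _; simp at hlen
        | cons h3 q =>
          cases q with
          | nil => intro _ hlen _; simp at hlen
          | cons h4 q =>
            cases q with
            | cons h5 q => intro _ hlen _; simp [SimpleGraph.Walk.length_cons] at hlen
            | nil =>
              intro heq _ hnd
              subst heq
              simp only [SimpleGraph.Walk.support_cons, SimpleGraph.Walk.support_nil,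
                List.tail_cons, List.nodup_cons, List.mem_cons, List.mem_singleton,
                List.nodup_nil, List.not_mem_nil] at hnd
              push_neg at hnd
              obtain ⟨⟨h12, h13, h1u⟩, ⟨h23, h2u⟩, h3u, -⟩ := hnd
              rename_i v1 v2 v3
              rcases u with a0 | b0 <;> rcases v1 with a1 | b1 <;>
                rcases v2 with a2 | b2 <;> rcases v3 with a3 | b3 <;>
                first
                  | exact h1 | exact h2 | exact h3 | exact h4
                  | skip
              · -- first case: inl a0 → vv → inl a1 → inr b2 → inl a0
                rename_i vv
                rcases vv with az | b1
                · exact h1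
                · obtain ⟨k, x⟩ := a0
                  obtain ⟨k', x'⟩ := a1
                  obtain ⟨l, y⟩ := b1
                  obtain ⟨l', y'⟩ := b2
                  refine no4 hplarge ?_ ?_ h1 h2 h3 h4
                  · intro he
                    exact h2u.1 (by rw [he])
                  · intro he
                    exact h13 (by rw [he])
              · -- second case: inr b0 → vv → inr b1 → inl a2 → inr b0
                rename_i vv
                rcases vv with a1 | bz
                · obtain ⟨k, x⟩ := a1
                  obtain ⟨k', x'⟩ := a2
                  obtain ⟨l, y⟩ := b0
                  obtain ⟨l', y'⟩ := b1
                  refine no4 hplarge ?_ ?_ h1 h4 h3 h2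
                  · intro he
                    exact h13 (by rw [he])
                  · intro he
                    exact h2u.1 (by rw [he])
                · exact h1
  exact main v v c rfl hlen hnd


lemma block_ncard {n p : ℕ} [NeZero p] (c : K n) :
    ({q : K n × ZMod p | q.1 = c}).ncard = p := by
  have himg : {q : K n × ZMod p | q.1 = c} = (fun x : ZMod p => (c, x)) '' Set.univ := by
    ext ⟨k, x⟩
    simp only [Set.mem_setOf_eq, Set.image_univ, Set.mem_range, Prod.mk.injEq]
    constructor
    · rintro rfl
      exact ⟨x, rfl, rfl⟩
    · rintro ⟨y, rfl, rfl⟩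
      rfl
  rw [himg, Set.ncard_image_of_injective _ (fun a b hab => (Prod.ext_iff.mp hab).2),
    Set.ncard_univ, Nat.card_zmod]

end SizeableAux

lemma cycleGraphZ_connected {N : ℕ} (hN : 2 ≤ N) : (cycleGraphZ N).Connected := by
  haveI : NeZero N := ⟨by omega⟩
  haveI : Fact (1 < N) := ⟨by omega⟩
  rw [SimpleGraph.connected_iff]
  refine ⟨?_, ⟨0⟩⟩
  have key : ∀ m : ℕ, (cycleGraphZ N).Reachable 0 (m : ZMod N) := by
    intro m
    induction m with
    | zero => exact ⟨SimpleGraph.Walk.nil.copy rfl (by simp)⟩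
    | succ m ih =>
      refine ih.trans (SimpleGraph.Adj.reachable ?_)
      change _ ≠ _ ∧ (_ - _ = 1 ∨ _ - _ = 1)
      refine ⟨?_, Or.inr (by push_cast; ring)⟩
      intro hh
      push_cast at hh
      exact one_ne_zero (left_eq_add.mp hh)
  intro u v
  have hu := key u.val
  have hv := key v.val
  rw [ZMod.natCast_rightInverse u] at hu
  rw [ZMod.natCast_rightInverse v] at hv
  exact hu.symm.trans hv


namespace SizeableAux
section Iso
variable {n p : ℕ} [hp : Fact p.Prime]

lemma p_large_facts (hn : 1 ≤ n) (hplarge : 3 ^ (8 * n ^ 2) < p) : 6561 < p := by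
  have : (3:ℕ) ^ 8 ≤ 3 ^ (8 * n ^ 2) := Nat.pow_le_pow_right (by norm_num) (by nlinarith)
  calc (6561:ℕ) = 3 ^ 8 := by norm_num
  _ ≤ 3 ^ (8 * n ^ 2) := this
  _ < p := hplarge

lemma three_ne_zero' (hn : 1 ≤ n) (hplarge : 3 ^ (8 * n ^ 2) < p) : (3 : ZMod p) ≠ 0 := by
  have hbig := p_large_facts hn hplarge
  have : ((3 : ℕ) : ZMod p) ≠ 0 := by
    intro h0
    rw [ZMod.natCast_eq_zero_iff] at h0
    have hdvd := h0
    have := Nat.le_of_dvd (by norm_num) hdvd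
    omega
  simpa using this

lemma iso_block (hn : 1 ≤ n) (hplarge : 3 ^ (8 * n ^ 2) < p) (i : Fin n) (s : Bool)
    (j : Fin n) (t : Bool) :
    Nonempty
      ((Gamma n p).induce
          (Sum.inl '' {q : K n × ZMod p | q.1 = (i, s)} ∪
            Sum.inr '' {q : K n × ZMod p | q.1 = (j, t)}) ≃g
        cycleGraphZ (2 * p)) := by
  have hbig := p_large_facts hn hplarge
  set S : Set ((K n × ZMod p) ⊕ (K n × ZMod p)) :=
    Sum.inl '' {q : K n × ZMod p | q.1 = (i, s)} ∪
      Sum.inr '' {q : K n × ZMod p | q.1 = (j, t)} with hS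
  set g : ZMod p := (3 : ZMod p) ^ pidx ((i, s) : K n) ((j, t) : K n) with hgdef
  have hg : g ≠ 0 := pow_ne_zero _ (three_ne_zero' hn hplarge)
  have hng : -g ≠ 0 := neg_ne_zero.mpr hg
  -- the vertex map
  set h : ZMod 2 × ZMod p → (K n × ZMod p) ⊕ (K n × ZMod p) :=
    fun c => if c.1 = 0 then Sum.inl ((i, s), -g * c.2)
      else Sum.inr ((j, t), -g * c.2 + 2 * g) with hhdef
  have hz2 : ∀ ε : ZMod 2, ε = 0 ∨ ε = 1 := by decide
  have hmem : ∀ c, h c ∈ S := by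
    intro c
    by_cases hc : c.1 = 0
    · exact Or.inl ⟨((i, s), -g * c.2), rfl, by simp [hhdef, hc]⟩
    · exact Or.inr ⟨((j, t), -g * c.2 + 2 * g), rfl, by simp [hhdef, hc]⟩
  set h' : ZMod 2 × ZMod p → ↥S := fun c => ⟨h c, hmem c⟩ with hh'def
  have hinj : Function.Injective h' := by
    rintro ⟨ε, w⟩ ⟨ε', w'⟩ hcc
    have hcc' : h (ε, w) = h (ε', w') := congrArg Subtype.val hcc
    rcases hz2 ε with rfl | rfl <;> rcases hz2 ε' with rfl | rfl <;>
      simp [hhdef] at hcc' <;>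
      (rcases hcc' with hww | hg0
       · exact Prod.ext rfl hww
       · exact absurd hg0 hg)
  have hsurj : Function.Surjective h' := by
    rintro ⟨v, hv⟩
    rcases hv with ⟨q, hq, rfl⟩ | ⟨q, hq, rfl⟩
    · refine ⟨(0, (-g)⁻¹ * q.2), ?_⟩
      apply Subtype.ext
      simp only [hh'def, hhdef]
      rw [if_pos (by trivial)]
      simp only [Set.mem_setOf_eq] at hq
      congr 1
      rw [← hq]
      refine Prod.ext rfl ?_
      simp only
      rw [← mul_assoc, mul_inv_cancel₀ hng, one_mul]
    · refine ⟨(1, (-g)⁻¹ * (q.2 - 2 * g)), ?_⟩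
      apply Subtype.ext
      simp only [hh'def, hhdef]
      rw [if_neg (show ¬((1 : ZMod 2) = 0) by decide)]
      simp only [Set.mem_setOf_eq] at hq
      congr 1
      rw [← hq]
      refine Prod.ext rfl ?_
      simp only
      rw [← mul_assoc, mul_inv_cancel₀ hng, one_mul]
      ring
  have hcop : Nat.Coprime 2 p := by
    rcases (Nat.coprime_primes Nat.prime_two hp.out).mpr (by omega) with h
    exact h
  set crt := ZMod.chineseRemainder hcop with hcrt
  set e : ZMod (2 * p) ≃ ↥S := crt.toEquiv.trans (Equiv.ofBijective h' ⟨hinj, hsurj⟩) with hedef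
  have hecoe : ∀ z : ZMod (2 * p), (e z : (K n × ZMod p) ⊕ (K n × ZMod p)) = h (crt z) := by
    intro z; rfl
  -- subtraction components
  have hsub : ∀ z z' : ZMod (2 * p), z - z' = 1 ↔
      ((crt z).1 - (crt z').1 = 1 ∧ (crt z).2 - (crt z').2 = 1) := by
    intro z z'
    constructor
    · intro hzz
      have : crt z - crt z' = 1 := by rw [← map_sub, hzz, map_one]
      constructor
      · exact congrArg Prod.fst this
      · exact congrArg Prod.snd this
    · intro ⟨ha, hb⟩
      have h1 : crt (z - z') = crt 1 := by
        rw [map_sub, map_one]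
        exact Prod.ext ha hb
      exact crt.injective h1

  have hv0 : ∀ w : ZMod p, h (0, w) = Sum.inl ((i, s), -g * w) := by
    intro w
    simp only [hhdef]
    rw [if_pos (by trivial)]
  have hv1 : ∀ w : ZMod p, h (1, w) = Sum.inr ((j, t), -g * w + 2 * g) := by
    intro w
    simp only [hhdef]
    rw [if_neg (show ¬((1 : ZMod 2) = 0) by decide)]
  have h3g : (3 : ZMod p) ^ (pidx ((i, s) : K n) ((j, t) : K n) + 1) = 3 * g := by
    rw [hgdef, pow_succ]
    ring
  have d1 : ∀ w w' : ZMod p, (-g * w' + 2 * g) - (-g * w) = g ↔ w' - w = 1 := by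
    intro w w'
    constructor
    · intro hh
      have h2 : g * (w' - w) = g * 1 := by linear_combination (-1 : ZMod p) * hh
      exact mul_left_cancel₀ hg h2
    · intro hh
      linear_combination (-g) * hh
  have d2 : ∀ w w' : ZMod p, (-g * w' + 2 * g) - (-g * w) = 3 * g ↔ w - w' = 1 := by
    intro w w'
    constructor
    · intro hh
      have h2 : g * (w - w') = g * 1 := by linear_combination hh
      exact mul_left_cancel₀ hg h2
    · intro hh
      linear_combination g * hh
  have erel01 : ∀ w w' : ZMod p,
      Erel ((i, s), -g * w) (((j, t) : K n), -g * w' + 2 * g) ↔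
        (w' - w = 1 ∨ w - w' = 1) := by
    intro w w'
    unfold Erel
    dsimp only
    rw [← hgdef, h3g, d1 w w', d2 w w']
  have hadj : ∀ z z' : ZMod (2 * p),
      ((Gamma n p).induce S).Adj (e z) (e z') ↔ (cycleGraphZ (2 * p)).Adj z z' := by
    intro z z'
    have hA : ((Gamma n p).induce S).Adj (e z) (e z') ↔
        (Gamma n p).Adj (e z : (K n × ZMod p) ⊕ (K n × ZMod p)) (e z') := Iff.rfl
    rw [hA, hecoe z, hecoe z']
    obtain ⟨⟨ε, w⟩, hcz⟩ : ∃ c, crt z = c := ⟨_, rfl⟩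
    obtain ⟨⟨ε', w'⟩, hcz'⟩ : ∃ c, crt z' = c := ⟨_, rfl⟩
    rw [hcz, hcz']
    have hzne : ∀ (hεε : ε ≠ ε'), z ≠ z' := by
      intro hεε hzz
      apply hεε
      have := congrArg crt hzz
      rw [hcz, hcz'] at this
      exact congrArg Prod.fst this
    rcases hz2 ε with rfl | rfl <;> rcases hz2 ε' with rfl | rfl
    · -- (0,0)
      rw [hv0 w, hv0 w']
      constructor
      · intro hh
        exact absurd hh (fun x => x)
      · rintro (⟨-, hd | hd⟩ : _ ∧ _)
        · rw [hsub z z', hcz, hcz'] at hd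
          exact absurd hd.1 (by dsimp only; decide)
        · rw [hsub z' z, hcz, hcz'] at hd
          exact absurd hd.1 (by dsimp only; decide)
    · -- (0,1)
      rw [hv0 w, hv1 w']
      constructor
      · intro hh
        have he : Erel ((i, s), -g * w) (((j, t) : K n), -g * w' + 2 * g) := hh
        refine (⟨hzne (by decide), ?_⟩ : _ ∧ _)
        rcases (erel01 w w').mp he with hw | hw
        · right
          rw [hsub z' z, hcz, hcz']
          exact ⟨by dsimp only; decide, hw⟩
        · left
          rw [hsub z z', hcz, hcz']
          exact ⟨by dsimp only; decide, hw⟩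
      · rintro (⟨-, hd | hd⟩ : _ ∧ _)
        · rw [hsub z z', hcz, hcz'] at hd
          exact (erel01 w w').mpr (Or.inr hd.2)
        · rw [hsub z' z, hcz, hcz'] at hd
          exact (erel01 w w').mpr (Or.inl hd.2)
    · -- (1,0)
      rw [hv1 w, hv0 w']
      constructor
      · intro hh
        have he : Erel ((i, s), -g * w') (((j, t) : K n), -g * w + 2 * g) := hh
        refine (⟨hzne (by decide), ?_⟩ : _ ∧ _)
        rcases (erel01 w' w).mp he with hw | hw
        · left
          rw [hsub z z', hcz, hcz']
          exact ⟨by dsimp only; decide, hw⟩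
        · right
          rw [hsub z' z, hcz, hcz']
          exact ⟨by dsimp only; decide, hw⟩
      · rintro (⟨-, hd | hd⟩ : _ ∧ _)
        · rw [hsub z z', hcz, hcz'] at hd
          exact (erel01 w' w).mpr (Or.inl hd.2)
        · rw [hsub z' z, hcz, hcz'] at hd
          exact (erel01 w' w).mpr (Or.inr hd.2)
    · -- (1,1)
      rw [hv1 w, hv1 w']
      constructor
      · intro hh
        exact absurd hh (fun x => x)
      · rintro (⟨-, hd | hd⟩ : _ ∧ _)
        · rw [hsub z z', hcz, hcz'] at hd
          exact absurd hd.1 (by dsimp only; decide)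
        · rw [hsub z' z, hcz, hcz'] at hd
          exact absurd hd.1 (by dsimp only; decide)
  exact ⟨(⟨e, hadj _ _⟩ : cycleGraphZ (2 * p) ≃g (Gamma n p).induce S).symm⟩
end Iso
end SizeableAux

theorem exists_sizeable_graph_with_cycle_blocks (n : ℕ) (hn : 1 ≤ n) :
    ∃ (p : ℕ), p.Prime ∧
    ∃ (A B : Type) (Γ : SimpleGraph (A ⊕ B))
      (Ab : Fin n → Bool → Set A) (Bb : Fin n → Bool → Set B),
      Finite A ∧ Finite B ∧
      (∀ x y, Γ.Adj x y →
        ∃ (a : A) (b : B), (x = Sum.inl a ∧ y = Sum.inr b) ∨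
          (x = Sum.inr b ∧ y = Sum.inl a)) ∧
      (∀ i s j t, (Ab i s ∩ Ab j t).Nonempty ↔ (i = j ∧ s = t)) ∧
      (∀ i s j t, (Bb i s ∩ Bb j t).Nonempty ↔ (i = j ∧ s = t)) ∧
      (⋃ i, ⋃ s, Ab i s) = Set.univ ∧
      (⋃ j, ⋃ t, Bb j t) = Set.univ ∧
      (¬ ∃ (v : A ⊕ B) (c : Γ.Walk v v), c.IsCycle ∧ c.length = 4) ∧
      (∀ i s, (Ab i s).ncard = p) ∧
      (∀ j t, (Bb j t).ncard = p) ∧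
      (∀ i s j t,
        (Γ.induce (Sum.inl '' Ab i s ∪ Sum.inr '' Bb j t)).Connected) ∧
      (∀ i s j t,
        Nonempty
          ((Γ.induce (Sum.inl '' Ab i s ∪ Sum.inr '' Bb j t)) ≃g
            cycleGraphZ (2 * p))) := by
  obtain ⟨p, hple, hp⟩ := Nat.exists_infinite_primes (3 ^ (8 * n ^ 2) + 1)
  haveI hpf : Fact p.Prime := ⟨hp⟩
  haveI : NeZero p := ⟨hp.pos.ne'⟩
  have hplarge : 3 ^ (8 * n ^ 2) < p := by omega
  refine ⟨p, hp, SizeableAux.K n × ZMod p, SizeableAux.K n × ZMod p, SizeableAux.Gamma n p,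
    (fun i s => {q | q.1 = (i, s)}), (fun j t => {q | q.1 = (j, t)}),
    inferInstance, inferInstance, ?_, ?_, ?_, ?_, ?_, ?_, ?_, ?_, ?_, ?_⟩
  · -- bipartite
    rintro (a | b) (a' | b') h
    · exact absurd h (fun x => x)
    · exact ⟨a, b', Or.inl ⟨rfl, rfl⟩⟩
    · exact ⟨a', b, Or.inr ⟨rfl, rfl⟩⟩
    · exact absurd h (fun x => x)
  · -- A-block intersections
    intro i s j t
    constructor
    · rintro ⟨q, hq1, hq2⟩
      simp only [Set.mem_setOf_eq] at hq1 hq2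
      rw [hq1] at hq2
      exact Prod.ext_iff.mp hq2
    · rintro ⟨rfl, rfl⟩
      exact ⟨((i, s), 0), rfl, rfl⟩
  · -- B-block intersections
    intro i s j t
    constructor
    · rintro ⟨q, hq1, hq2⟩
      simp only [Set.mem_setOf_eq] at hq1 hq2
      rw [hq1] at hq2
      exact Prod.ext_iff.mp hq2
    · rintro ⟨rfl, rfl⟩
      exact ⟨((i, s), 0), rfl, rfl⟩
  · -- A union
    rw [Set.eq_univ_iff_forall]
    intro q
    simp only [Set.mem_iUnion]
    exact ⟨q.1.1, q.1.2, rfl⟩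
  · -- B union
    rw [Set.eq_univ_iff_forall]
    intro q
    simp only [Set.mem_iUnion]
    exact ⟨q.1.1, q.1.2, rfl⟩
  · -- no 4-cycle
    exact SizeableAux.gamma_no4 hplarge
  · -- A block cardinality
    intro i s
    exact SizeableAux.block_ncard (i, s)
  · -- B block cardinality
    intro j t
    exact SizeableAux.block_ncard (j, t)
  · -- connectivity
    intro i s j t
    obtain ⟨φ⟩ := SizeableAux.iso_block hn hplarge i s j t
    have hp2 : 2 ≤ 2 * p := by have := hp.two_le; omega
    exact φ.connected_iff.mpr (cycleGraphZ_connected hp2)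
  · -- cycle structure
    intro i s j t
    exact SizeableAux.iso_block hn hplarge i s j t
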